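/- Let f : X → X be a continuous map on a metric space (X,d), let ε > 0, and let K, L be nonempty compact subsets of X. If (K,L) is a LY ε-pair for the hyperextension f̄ and the Hausdorff metric d_H, then at least one of the pairs (K, K∪L) or (K∪L, L) is a LY ε/2-pair for f̄ and d_H. -/

import Mathlib

open Filter Metric TopologicalSpace

/-- The hyperextension of a continuous map `f`, acting on the space `𝒦(X)` of nonempty
compact subsets of `X` (endowed with the Hausdorff metric) by `K ↦ f(K)`. -/
noncomputable def hyperext {X : Type*} [MetricSpace X] (f : X → X) (hf : Continuous f) :
    NonemptyCompacts X → NonemptyCompacts X :=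
  fun K => ⟨⟨f '' K, K.isCompact.image hf⟩, K.nonempty.image f⟩

/-- `(y,z)` is a Li–Yorke ε-pair for `g` and the metric of `Y`. -/
def IsLYPair {Y : Type*} [MetricSpace Y] (g : Y → Y) (ε : ℝ) (y z : Y) : Prop :=
  ε ≤ limsup (fun n : ℕ => dist (g^[n] y) (g^[n] z)) atTop ∧
    liminf (fun n : ℕ => dist (g^[n] y) (g^[n] z)) atTop = 0

/-- `S` is a Li–Yorke ε-scrambled set for `g`. -/
def LYScrambled {Y : Type*} [MetricSpace Y] (g : Y → Y) (ε : ℝ) (S : Set Y) : Prop :=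
  ∀ y ∈ S, ∀ z ∈ S, y ≠ z → IsLYPair g ε y z

/-- The underlying set of an iterate of the hyperextension. -/
lemma hyperext_iterate_coe {X : Type*} [MetricSpace X] (f : X → X) (hf : Continuous f)
    (K : NonemptyCompacts X) (n : ℕ) :
    ((hyperext f hf)^[n] K : Set X) = f^[n] '' (K : Set X) := by
  induction n with
  | zero => simp
  | succ n ih =>
    rw [Function.iterate_succ_apply']
    show f '' ((hyperext f hf)^[n] K : Set X) = _
    rw [ih, ← Set.image_comp, ← Function.iterate_succ']

/-- Hausdorff edist from a set to its union with another set. -/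
lemma hausdorffEdist_left_union {X : Type*} [MetricSpace X] (A B : Set X) :
    EMetric.hausdorffEdist A (A ∪ B) ≤ EMetric.hausdorffEdist A B := by
  refine EMetric.hausdorffEdist_le_of_infEdist (fun x hx => ?_) (fun x hx => ?_)
  · calc EMetric.infEdist x (A ∪ B) ≤ EMetric.infEdist x A :=
        EMetric.infEdist_anti Set.subset_union_left
    _ = 0 := EMetric.infEdist_zero_of_mem hx
    _ ≤ _ := zero_le
  · rcases hx with hx | hx
    · simp [EMetric.infEdist_zero_of_mem hx]
    · exact EMetric.infEdist_le_hausdorffEdist_of_mem hx |>.trans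
        (le_of_eq (EMetric.hausdorffEdist_comm))

lemma dist_left_union {X : Type*} [MetricSpace X] (A B C : NonemptyCompacts X)
    (hC : (C : Set X) = (A : Set X) ∪ (B : Set X)) : dist A C ≤ dist A B := by
  rw [NonemptyCompacts.dist_eq, NonemptyCompacts.dist_eq, hC]
  exact ENNReal.toReal_mono
    (hausdorffEdist_ne_top_of_nonempty_of_bounded A.nonempty B.nonempty
      A.isCompact.isBounded B.isCompact.isBounded)
    (hausdorffEdist_left_union _ _)

lemma dist_union_right {X : Type*} [MetricSpace X] (A B C : NonemptyCompacts X)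
    (hC : (C : Set X) = (A : Set X) ∪ (B : Set X)) : dist C B ≤ dist A B := by
  have := dist_left_union B A C (by rw [hC, Set.union_comm])
  rwa [dist_comm C B, dist_comm A B]

/-- If `(K,L)` is a LY ε-pair for the hyperextension `f̄` and the Hausdorff metric, then at
least one of `(K, K ∪ L)` or `(K ∪ L, L)` is a LY ε/2-pair for `f̄` and `d_H`. -/
theorem lyPair_union_of_lyPair {X : Type*} [MetricSpace X]
    (f : X → X) (hf : Continuous f) (ε : ℝ) (hε : 0 < ε)
    (K L KL : NonemptyCompacts X) (hKL : (KL : Set X) = (K : Set X) ∪ (L : Set X))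
    (h : IsLYPair (hyperext f hf) ε K L) :
    IsLYPair (hyperext f hf) (ε / 2) K KL ∨ IsLYPair (hyperext f hf) (ε / 2) KL L := by
  set g := hyperext f hf
  set a : ℕ → ℝ := fun n => dist (g^[n] K) (g^[n] KL) with ha
  set b : ℕ → ℝ := fun n => dist (g^[n] KL) (g^[n] L) with hb
  set c : ℕ → ℝ := fun n => dist (g^[n] K) (g^[n] L) with hc
  have hKLn : ∀ n, ((g^[n] KL : Set X)) = ((g^[n] K : Set X)) ∪ ((g^[n] L : Set X)) := by
    intro n
    rw [hyperext_iterate_coe, hyperext_iterate_coe, hyperext_iterate_coe, hKL, Set.image_union]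
  have hac : ∀ n, a n ≤ c n := fun n => dist_left_union _ _ _ (hKLn n)
  have hbc : ∀ n, b n ≤ c n := fun n => dist_union_right _ _ _ (hKLn n)
  have hcab : ∀ n, c n ≤ a n + b n := fun n => dist_triangle _ _ _
  -- `c` is bounded above, otherwise its limsup would be `0 < ε`
  have hcbd : IsBoundedUnder (· ≤ ·) atTop c := by
    by_contra hB
    have : {r : ℝ | ∀ᶠ n in atTop, c n ≤ r} = ∅ := by
      ext r
      simp only [Set.mem_setOf_eq, Set.mem_empty_iff_false, iff_false]
      exact fun hr => hB ⟨r, hr⟩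
    have : limsup c atTop = 0 := by
      rw [limsup_eq, this, Real.sInf_empty]
    exact absurd (h.1.trans_eq this) (not_le.2 hε)
  obtain ⟨M, hM'⟩ := hcbd
  have hM : ∀ᶠ n in atTop, c n ≤ M := eventually_map.1 hM'
  have habd : IsBoundedUnder (· ≤ ·) atTop a :=
    isBoundedUnder_of_eventually_le (hM.mono fun n hn => (hac n).trans hn)
  have hbbd : IsBoundedUnder (· ≤ ·) atTop b :=
    isBoundedUnder_of_eventually_le (hM.mono fun n hn => (hbc n).trans hn)
  have ha0 : IsBoundedUnder (· ≥ ·) atTop a := ⟨0, eventually_map.2 (Eventually.of_forall fun n => dist_nonneg)⟩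
  have hb0 : IsBoundedUnder (· ≥ ·) atTop b := ⟨0, eventually_map.2 (Eventually.of_forall fun n => dist_nonneg)⟩
  have hc0 : IsBoundedUnder (· ≥ ·) atTop c := ⟨0, eventually_map.2 (Eventually.of_forall fun n => dist_nonneg)⟩
  -- liminf of `a` and `b` are zero
  have liminf_a : liminf a atTop = 0 := by
    refine le_antisymm ?_ (le_liminf_of_le habd.isCoboundedUnder_ge
      (Eventually.of_forall fun n => dist_nonneg))
    calc liminf a atTop ≤ liminf c atTop :=
          liminf_le_liminf (Eventually.of_forall hac) ha0
            (isBoundedUnder_of_eventually_le hM).isCoboundedUnder_ge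
    _ = 0 := h.2
  have liminf_b : liminf b atTop = 0 := by
    refine le_antisymm ?_ (le_liminf_of_le hbbd.isCoboundedUnder_ge
      (Eventually.of_forall fun n => dist_nonneg))
    calc liminf b atTop ≤ liminf c atTop :=
          liminf_le_liminf (Eventually.of_forall hbc) hb0
            (isBoundedUnder_of_eventually_le hM).isCoboundedUnder_ge
    _ = 0 := h.2
  -- limsup estimate
  have key : ε ≤ limsup a atTop + limsup b atTop := by
    calc ε ≤ limsup c atTop := h.1
    _ ≤ limsup (a + b) atTop :=
        limsup_le_limsup (Eventually.of_forall hcab) hc0.isCoboundedUnder_le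
          (isBoundedUnder_of_eventually_le (hM.mono fun n hn =>
            add_le_add ((hac n).trans hn) ((hbc n).trans hn)))
    _ ≤ limsup a atTop + limsup b atTop :=
        limsup_add_le ha0 habd hb0.isCoboundedUnder_le hbbd
  rcases le_or_gt (ε / 2) (limsup a atTop) with hA | hA
  · exact Or.inl ⟨hA, liminf_a⟩
  · refine Or.inr ⟨by linarith, liminf_b⟩
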